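/- Let S and U be countable types with measurable singletons and T a measurable space. Let A : Ω → S and C : Ω → U be random variables, let (Y_a)_{a ∈ S} be a family of random variables Y_a : Ω → T (potential outcomes), and let Y : Ω → T satisfy consistency: Y(ω) = Y_{A(ω)}(ω) for all ω. Fix a ∈ S. Assume conditional ignorability: for every measurable B ⊆ T, every a' ∈ S and every c ∈ U, P(Y_a ∈ B, A = a', C = c) · P(C = c) = P(Y_a ∈ B, C = c) · P(A = a', C = c). Assume positivity: P(A = a, C = c) > 0 for every c with P(C = c) > 0. Then for every measurable set B ⊆ T, P(Y_a ∈ B) = Σ_{c : P(C = c) > 0} P(Y ∈ B | A = a, C = c) · P(C = c). -/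

import Mathlib

open MeasureTheory ProbabilityTheory

/-- The back-door (adjustment) formula: under conditional ignorability of `Y_a` and `A`
given `C`, consistency, and positivity, `P(Y_a ∈ B) = Σ_c P(Y ∈ B | A = a, C = c)·P(C = c)`. -/
theorem backdoor_adjustment_formula
    {Ω : Type*} [MeasurableSpace Ω] (P : Measure Ω) [IsProbabilityMeasure P]
    {S : Type*} [Countable S] [MeasurableSpace S] [MeasurableSingletonClass S]
    {U : Type*} [Countable U] [MeasurableSpace U] [MeasurableSingletonClass U]
    {T : Type*} [MeasurableSpace T]
    (A : Ω → S) (hA : Measurable A)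
    (C : Ω → U) (hC : Measurable C)
    (Ypo : S → Ω → T) (hYpo : ∀ a, Measurable (Ypo a))
    (Y : Ω → T) (hcons : ∀ ω, Y ω = Ypo (A ω) ω)
    (a : S)
    (hcondIgn : ∀ (B : Set T), MeasurableSet B → ∀ (a' : S) (c : U),
      P {ω | Ypo a ω ∈ B ∧ A ω = a' ∧ C ω = c} * P {ω | C ω = c}
        = P {ω | Ypo a ω ∈ B ∧ C ω = c} * P {ω | A ω = a' ∧ C ω = c})
    (hpos : ∀ c : U, 0 < P {ω | C ω = c} → 0 < P {ω | A ω = a ∧ C ω = c}) :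
    ∀ (B : Set T), MeasurableSet B →
      P {ω | Ypo a ω ∈ B}
        = ∑' c : {c : U // 0 < P {ω | C ω = c}},
            P[|{ω | A ω = a ∧ C ω = (c : U)}] {ω | Y ω ∈ B} * P {ω | C ω = (c : U)} := by
  intro B hB
  set f : U → ENNReal := fun c => P {ω | Ypo a ω ∈ B ∧ C ω = c} with hf
  -- Step 1: decompose by C
  have hstep1 : P {ω | Ypo a ω ∈ B} = ∑' c : U, f c := by
    have hmeas : ∀ c : U, MeasurableSet {ω | Ypo a ω ∈ B ∧ C ω = c} := fun c =>
      ((hYpo a) hB).inter (hC (measurableSet_singleton c))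
    have hiU : {ω | Ypo a ω ∈ B} = ⋃ c : U, {ω | Ypo a ω ∈ B ∧ C ω = c} := by
      ext ω; simp [Set.mem_iUnion]
    rw [hiU, measure_iUnion _ hmeas]
    intro c c' hcc'
    simp only [Function.onFun, Set.disjoint_left]
    rintro ω ⟨_, hc⟩ ⟨_, hc'⟩
    exact hcc' (hc ▸ hc'.symm ▸ rfl)
  rw [hstep1]
  -- Step 2: restrict to positive c
  have hsupp : Function.support f ⊆ {c : U | 0 < P {ω | C ω = c}} := by
    intro c hc
    have h1 : {ω | Ypo a ω ∈ B ∧ C ω = c} ⊆ {ω | C ω = c} := fun ω h => h.2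
    have := measure_mono (μ := P) h1
    simp only [Set.mem_setOf_eq]
    by_contra hle
    push_neg at hle
    have h0 : P {ω | C ω = c} = 0 := le_antisymm hle zero_le
    exact hc (le_antisymm (h0 ▸ this) zero_le)
  rw [← tsum_subtype_eq_of_support_subset hsupp]
  apply tsum_congr
  rintro ⟨c, hcpos⟩
  -- per-term computation
  have hApos := hpos c hcpos
  have hAC : MeasurableSet {ω | A ω = a ∧ C ω = c} :=
    (hA (measurableSet_singleton a)).inter (hC (measurableSet_singleton c))
  have hne : P {ω | A ω = a ∧ C ω = c} ≠ 0 := hApos.ne'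
  have hntop : P {ω | A ω = a ∧ C ω = c} ≠ ⊤ := (measure_lt_top P _).ne
  have hset : {ω | A ω = a ∧ C ω = c} ∩ {ω | Y ω ∈ B}
      = {ω | Ypo a ω ∈ B ∧ A ω = a ∧ C ω = c} := by
    ext ω
    simp only [Set.mem_inter_iff, Set.mem_setOf_eq]
    constructor
    · rintro ⟨⟨ha, hc⟩, hy⟩
      refine ⟨?_, ha, hc⟩
      simpa [hcons ω, ha] using hy
    · rintro ⟨hy, ha, hc⟩
      exact ⟨⟨ha, hc⟩, by rw [hcons ω, ha]; exact hy⟩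
  rw [cond_apply hAC, hset, mul_assoc, hcondIgn B hB a c]
  rw [show P {ω | Ypo a ω ∈ B ∧ C ω = c} * P {ω | A ω = a ∧ C ω = c}
      = P {ω | A ω = a ∧ C ω = c} * f c by rw [mul_comm]]
  rw [← mul_assoc, ENNReal.inv_mul_cancel hne hntop, one_mul]
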